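/- Fix integers 1 ≤ t1 ≤ T, a price cap p̄ > 0, a base demand function H bounded on [0,p̄], and arbitrary parameters η⁺, η⁻ ≥ 0. When the starting reference price equals the price cap p̄, the optimal ARM revenue is unchanged if the loss parameter is replaced by the gain parameter: V*_{(η⁺,η⁻)}(p̄, t1) = V*_{(η⁺,η⁺)}(p̄, t1), where V*_{(α,β)}(r, t1) denotes the supremum over price sequences in [0,p̄]^{T−t1+1} of Σ_{t=t1}^{T} p_t·(H(p_t) + α·max(r_t − p_t, 0) − β·max(p_t − r_t, 0)) with ARM reference prices r_t starting from r at time t1. -/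
import Mathlib

/-- ARM reference price at time `t`, starting from reference price `r` at time `t1`:
`r_t = (t1·r + Σ_{s=t1}^{t−1} p_s)/t`. -/
noncomputable def armRef (t1 : ℕ) (r : ℝ) (p : ℕ → ℝ) (t : ℕ) : ℝ :=
  ((t1 : ℝ) * r + ∑ s ∈ Finset.Ico t1 t, p s) / (t : ℝ)

/-- Single-round expected revenue with gain parameter `α` and loss parameter `β`. -/
noncomputable def armRev (H : ℝ → ℝ) (α β : ℝ) (x r : ℝ) : ℝ :=
  x * (H x + α * max (r - x) 0 - β * max (x - r) 0)

/-- Total ARM revenue of price sequence `p` over rounds `t1..T`. -/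
noncomputable def armV (H : ℝ → ℝ) (α β : ℝ) (t1 T : ℕ) (r : ℝ) (p : ℕ → ℝ) : ℝ :=
  ∑ t ∈ Finset.Icc t1 T, armRev H α β (p t) (armRef t1 r p t)

/-- Optimal ARM revenue `V*_{(α,β)}(r, t1)`. -/
noncomputable def armVStar (H : ℝ → ℝ) (α β : ℝ) (t1 T : ℕ) (pbar r : ℝ) : ℝ :=
  sSup {x : ℝ | ∃ p : ℕ → ℝ,
    (∀ t ∈ Finset.Icc t1 T, p t ∈ Set.Icc 0 pbar) ∧ x = armV H α β t1 T r p}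

/-! ### Auxiliary development -/

/-- Revenue aggregated along a list of prices, with evolving time `t` and reference `r`. -/
noncomputable def seqG (f : ℝ → ℝ → ℝ) : ℝ → ℝ → List ℝ → ℝ
  | _, _, [] => 0
  | t, r, x :: l => f x r + seqG f (t + 1) ((t * r + x) / (t + 1)) l

/-- Gain contribution. -/
noncomputable def gf (x r : ℝ) : ℝ := x * max (r - x) 0

/-- Loss contribution. -/
noncomputable def lf (x r : ℝ) : ℝ := x * max (x - r) 0

set_option maxHeartbeats 1000000 in
lemma swap_poly (t r a b : ℝ) (ht : 1 ≤ t) (hr : 0 ≤ r) (ha : 0 ≤ a) (hab : a ≤ b) :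
    a * max (r-a) 0 * (t+1) + b * max (t*r+a-(t+1)*b) 0 ≤
    b * max (r-b) 0 * (t+1) + a * max (t*r+b-(t+1)*a) 0 := by
  have hba : 0 ≤ (t+1)*b - a := by nlinarith
  rcases max_cases (r - a) 0 with ⟨e1, h1⟩ | ⟨e1, h1⟩ <;>
  rcases max_cases (t*r+a-(t+1)*b) 0 with ⟨e2, h2⟩ | ⟨e2, h2⟩ <;>
  rcases max_cases (r - b) 0 with ⟨e3, h3⟩ | ⟨e3, h3⟩ <;>
  rcases max_cases (t*r+b-(t+1)*a) 0 with ⟨e4, h4⟩ | ⟨e4, h4⟩ <;>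
  rw [e1, e2, e3, e4] <;>
  nlinarith [h1, h2, h3, h4, hba, mul_nonneg ha hr, mul_nonneg (sub_nonneg.2 hab) hr,
    mul_nonneg ha (sub_nonneg.2 hab),
    mul_nonneg (mul_nonneg (sub_nonneg.2 hab) hr) (sub_nonneg.2 ht),
    mul_nonneg ha (sub_nonneg.2 ht), mul_nonneg (mul_nonneg ha hr) (sub_nonneg.2 ht),
    sq_nonneg (b-a), sq_nonneg (r-b), sq_nonneg (r-a)]

lemma swap_scalar (t r a b : ℝ) (ht : 1 ≤ t) (hr : 0 ≤ r) (ha : 0 ≤ a) (hab : a ≤ b) :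
    gf a r + gf b ((t*r+a)/(t+1)) ≤ gf b r + gf a ((t*r+b)/(t+1)) := by
  have ht1 : (0:ℝ) < t + 1 := by linarith
  have h2 : (t*r+a)/(t+1) - b = (t*r+a-(t+1)*b)/(t+1) := by field_simp
  have h4 : (t*r+b)/(t+1) - a = (t*r+b-(t+1)*a)/(t+1) := by field_simp
  have hmax : ∀ X : ℝ, max (X/(t+1)) 0 = max X 0 / (t+1) := fun X => by
    rw [← max_div_div_right ht1.le X 0, zero_div]
  unfold gf
  rw [h2, h4, hmax, hmax, ← sub_nonneg]
  have key : (b * max (r-b) 0 + a * (max (t*r+b-(t+1)*a) 0 / (t+1)))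
      - (a * max (r-a) 0 + b * (max (t*r+a-(t+1)*b) 0 / (t+1)))
      = ((b * max (r-b) 0 * (t+1) + a * max (t*r+b-(t+1)*a) 0)
        - (a * max (r-a) 0 * (t+1) + b * max (t*r+a-(t+1)*b) 0)) / (t+1) := by
    field_simp
  rw [key]
  exact div_nonneg (by linarith [swap_poly t r a b ht hr ha hab]) ht1.le

lemma seqG_gf_swap (t r a b : ℝ) (l : List ℝ) (ht : 1 ≤ t) (hr : 0 ≤ r) (ha : 0 ≤ a)
    (hab : a ≤ b) :
    seqG gf t r (a :: b :: l) ≤ seqG gf t r (b :: a :: l) := by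
  have ht1 : (0:ℝ) < t + 1 := by linarith
  have e : ((t+1) * ((t*r+a)/(t+1)) + b)/(t+1+1) = ((t+1) * ((t*r+b)/(t+1)) + a)/(t+1+1) := by
    field_simp; ring
  simp only [seqG]
  rw [e]
  linarith [swap_scalar t r a b ht hr ha hab]

lemma seqG_gf_insert (a : ℝ) (l : List ℝ) : ∀ (t r : ℝ), 1 ≤ t → 0 ≤ r → 0 ≤ a →
    (∀ x ∈ l, 0 ≤ x) →
    seqG gf t r (a :: l) ≤ seqG gf t r (l.orderedInsert (· ≥ ·) a) := by
  induction l with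
  | nil => intro t r _ _ _ _; simp [List.orderedInsert]
  | cons b l ih =>
    intro t r ht hr ha hl
    have hb : 0 ≤ b := hl b (by simp)
    by_cases hab : a ≥ b
    · simp [List.orderedInsert, hab]
    · push_neg at hab
      have hr' : 0 ≤ (t*r+b)/(t+1) := by positivity
      have step1 := seqG_gf_swap t r a b l ht hr ha hab.le
      have step2 := ih (t+1) ((t*r+b)/(t+1)) (by linarith) hr' ha
        (fun x hx => hl x (by simp [hx]))
      have hoi : List.orderedInsert (· ≥ ·) a (b :: l) = b :: List.orderedInsert (· ≥ ·) a l := by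
        simp [List.orderedInsert, hab.not_ge]
      rw [hoi]
      calc seqG gf t r (a :: b :: l) ≤ seqG gf t r (b :: a :: l) := step1
        _ ≤ seqG gf t r (b :: l.orderedInsert (· ≥ ·) a) := by
            simp only [seqG] at step2 ⊢; linarith [step2]

lemma seqG_gf_sort (l : List ℝ) : ∀ (t r : ℝ), 1 ≤ t → 0 ≤ r → (∀ x ∈ l, 0 ≤ x) →
    seqG gf t r l ≤ seqG gf t r (l.insertionSort (· ≥ ·)) := by
  induction l with
  | nil => intro t r _ _ _; simp
  | cons a l ih =>
    intro t r ht hr hl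
    have ha : 0 ≤ a := hl a (by simp)
    have hr' : 0 ≤ (t*r+a)/(t+1) := by positivity
    have h1 : seqG gf t r (a :: l) ≤ seqG gf t r (a :: l.insertionSort (· ≥ ·)) := by
      simp only [seqG]
      have := ih (t+1) ((t*r+a)/(t+1)) (by linarith) hr' (fun x hx => hl x (by simp [hx]))
      linarith
    have h2 : seqG gf t r (a :: l.insertionSort (· ≥ ·))
        ≤ seqG gf t r ((l.insertionSort (· ≥ ·)).orderedInsert (· ≥ ·) a) :=
      seqG_gf_insert a _ t r ht hr ha
        (fun x hx => hl x (List.mem_cons_of_mem a ((l.perm_insertionSort (· ≥ ·)).mem_iff.mp hx)))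
    calc seqG gf t r (a :: l) ≤ _ := h1
      _ ≤ _ := h2
      _ = seqG gf t r ((a :: l).insertionSort (· ≥ ·)) := by simp [List.insertionSort]

lemma seqG_lf_zero (l : List ℝ) : ∀ (t r : ℝ), 1 ≤ t → l.Pairwise (· ≥ ·) →
    (∀ x ∈ l, x ≤ r) → seqG lf t r l = 0 := by
  induction l with
  | nil => intro t r _ _ _; simp [seqG]
  | cons a l ih =>
    intro t r ht hs hle
    have ha : a ≤ r := hle a (by simp)
    obtain ⟨hhead, htail⟩ := List.pairwise_cons.mp hs
    simp only [seqG, lf]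
    rw [max_eq_right (by linarith), mul_zero, zero_add]
    refine ih (t+1) ((t*r+a)/(t+1)) (by linarith) htail (fun x hx => ?_)
    have hxa : x ≤ a := hhead x hx
    have : a ≤ (t*r+a)/(t+1) := by
      rw [le_div_iff₀ (by linarith)]; nlinarith
    linarith

lemma seqG_lf_nonneg (l : List ℝ) : ∀ (t r : ℝ), (∀ x ∈ l, 0 ≤ x) → 0 ≤ seqG lf t r l := by
  induction l with
  | nil => intro t r _; simp [seqG]
  | cons a l ih =>
    intro t r hl
    simp only [seqG, lf]
    have h1 : 0 ≤ a * max (a - r) 0 := mul_nonneg (hl a (by simp)) (le_max_right _ _)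
    have h2 := ih (t+1) ((t*r+a)/(t+1)) (fun x hx => hl x (by simp [hx]))
    linarith

lemma seqG_armRev (H : ℝ → ℝ) (α β : ℝ) (l : List ℝ) : ∀ (t r : ℝ),
    seqG (armRev H α β) t r l
      = (l.map (fun x => x * H x)).sum + α * seqG gf t r l - β * seqG lf t r l := by
  induction l with
  | nil => intro t r; simp [seqG]
  | cons a l ih =>
    intro t r
    simp only [seqG, armRev, gf, lf, List.map_cons, List.sum_cons, ih]
    ring

lemma sum_Ico_eq_seqG (f : ℝ → ℝ → ℝ) :
    ∀ (n t1 : ℕ), 1 ≤ t1 → ∀ (r : ℝ) (p : ℕ → ℝ),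
      ∑ t ∈ Finset.Ico t1 (t1 + n), f (p t) (armRef t1 r p t)
        = seqG f (t1 : ℝ) r ((List.range' t1 n).map p) := by
  intro n
  induction n with
  | zero => intro t1 _ r p; simp [seqG]
  | succ n ih =>
    intro t1 ht1 r p
    have ht1R : ((t1:ℝ)) ≠ 0 := by
      exact_mod_cast (Nat.one_le_iff_ne_zero.mp ht1)
    have hlt : t1 < t1 + (n+1) := by omega
    rw [Finset.sum_eq_sum_Ico_succ_bot hlt]
    have href : armRef t1 r p t1 = r := by
      rw [armRef, Finset.Ico_self, Finset.sum_empty, add_zero, mul_comm,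
        mul_div_assoc, div_self ht1R, mul_one]
    rw [href, List.range'_succ, List.map_cons]
    simp only [seqG]
    congr 1
    set r' : ℝ := ((t1:ℝ) * r + p t1) / ((t1:ℝ) + 1) with hr'
    have hbounds : t1 + (n+1) = (t1+1) + n := by omega
    rw [hbounds]
    have hre : ∀ t ∈ Finset.Ico (t1+1) ((t1+1) + n),
        armRef t1 r p t = armRef (t1+1) r' p t := by
      intro t htmem
      have ht : t1 + 1 ≤ t := (Finset.mem_Ico.mp htmem).1
      rw [armRef, armRef]
      congr 1
      have hcast : ((t1+1 : ℕ) : ℝ) = (t1:ℝ) + 1 := by push_cast; ring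
      have h1 : ((t1+1 : ℕ) : ℝ) * r' = (t1:ℝ) * r + p t1 := by
        rw [hcast, hr']
        field_simp
      rw [h1, Finset.sum_eq_sum_Ico_succ_bot (by omega : t1 < t)]
      ring
    have hre' : ∀ t ∈ Finset.Ico (t1+1) ((t1+1) + n),
        f (p t) (armRef t1 r p t) = f (p t) (armRef (t1+1) r' p t) :=
      fun t ht => by rw [hre t ht]
    rw [Finset.sum_congr rfl hre', ih (t1+1) (by omega) r' p]
    norm_cast

lemma armV_eq_seqG (H : ℝ → ℝ) (α β : ℝ) (t1 T : ℕ) (r : ℝ) (p : ℕ → ℝ)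
    (ht1 : 1 ≤ t1) :
    armV H α β t1 T r p
      = seqG (armRev H α β) (t1 : ℝ) r ((List.range' t1 (T+1-t1)).map p) := by
  by_cases hT : t1 ≤ T
  · have h : Finset.Icc t1 T = Finset.Ico t1 (t1 + (T+1-t1)) := by
      rw [← Finset.Ico_add_one_right_eq_Icc]
      congr 1
      omega
    rw [armV, h, sum_Ico_eq_seqG _ _ _ ht1]
  · push_neg at hT
    have h1 : T + 1 - t1 = 0 := by omega
    have h2 : Finset.Icc t1 T = ∅ := by
      rw [Finset.Icc_eq_empty]; omega
    rw [armV, h1, h2]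
    simp [seqG]

lemma mem_of_mem_mapped_range' (p : ℕ → ℝ) (t1 n : ℕ) (x : ℝ)
    (hx : x ∈ (List.range' t1 n).map p) : ∃ s, t1 ≤ s ∧ s < t1 + n ∧ x = p s := by
  obtain ⟨s, hs, rfl⟩ := List.mem_map.mp hx
  exact ⟨s, (List.mem_range'_1.mp hs).1, (List.mem_range'_1.mp hs).2, rfl⟩

/-- Key step: any admissible price sequence is dominated by one (its decreasing
rearrangement) whose value does not depend on the loss parameter. -/
lemma arm_key (pbar : ℝ) (hpbar : 0 < pbar) (H : ℝ → ℝ) (α β β' : ℝ)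
    (hα : 0 ≤ α) (hβ : 0 ≤ β) (hβ' : 0 ≤ β')
    (t1 T : ℕ) (ht1 : 1 ≤ t1) (hT : t1 ≤ T) (p : ℕ → ℝ)
    (hp : ∀ t ∈ Finset.Icc t1 T, p t ∈ Set.Icc 0 pbar) :
    ∃ p' : ℕ → ℝ, (∀ t ∈ Finset.Icc t1 T, p' t ∈ Set.Icc 0 pbar) ∧
      armV H α β t1 T pbar p ≤ armV H α β' t1 T pbar p' := by
  set n := T + 1 - t1 with hn
  set l : List ℝ := (List.range' t1 n).map p with hl
  set l' : List ℝ := l.insertionSort (· ≥ ·) with hl'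
  have hperm : List.Perm l' l := l.perm_insertionSort (· ≥ ·)
  have hmemIcc : ∀ x ∈ l, x ∈ Set.Icc 0 pbar := by
    intro x hx
    obtain ⟨s, hs1, hs2, rfl⟩ := mem_of_mem_mapped_range' p t1 n x hx
    exact hp s (Finset.mem_Icc.mpr ⟨hs1, by omega⟩)
  have hmemIcc' : ∀ x ∈ l', x ∈ Set.Icc 0 pbar := fun x hx => hmemIcc x (hperm.mem_iff.mp hx)
  have hlen' : l'.length = n := by
    rw [hl', List.length_insertionSort, hl, List.length_map, List.length_range']
  set p' : ℕ → ℝ := fun t => l'.getD (t - t1) 0 with hp'def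
  have hmap : (List.range' t1 n).map p' = l' := by
    apply List.ext_getElem
    · simp [hlen']
    · intro i h1 h2
      have hi : i < n := by simpa using h1
      simp only [List.getElem_map, List.getElem_range']
      show l'.getD (t1 + 1 * i - t1) 0 = l'[i]
      have : t1 + 1 * i - t1 = i := by omega
      rw [this, List.getD_eq_getElem l' 0 (by omega : i < l'.length)]
  have hadm' : ∀ t ∈ Finset.Icc t1 T, p' t ∈ Set.Icc 0 pbar := by
    intro t ht
    obtain ⟨h1, h2⟩ := Finset.mem_Icc.mp ht
    have hlt : t - t1 < l'.length := by omega
    rw [hp'def]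
    simp only
    rw [List.getD_eq_getElem l' 0 hlt]
    exact hmemIcc' _ (l'.getElem_mem hlt)
  have ht1R : (1:ℝ) ≤ (t1:ℝ) := by exact_mod_cast ht1
  have hnn : ∀ x ∈ l, 0 ≤ x := fun x hx => (hmemIcc x hx).1
  have hG : seqG gf (t1:ℝ) pbar l ≤ seqG gf (t1:ℝ) pbar l' :=
    seqG_gf_sort l (t1:ℝ) pbar ht1R hpbar.le hnn
  have hL0 : seqG lf (t1:ℝ) pbar l' = 0 :=
    seqG_lf_zero l' (t1:ℝ) pbar ht1R (List.pairwise_insertionSort _ l)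
      (fun x hx => (hmemIcc' x hx).2)
  have hLnn : 0 ≤ seqG lf (t1:ℝ) pbar l := seqG_lf_nonneg l (t1:ℝ) pbar hnn
  have hHsum : ((l'.map (fun x => x * H x)).sum : ℝ) = (l.map (fun x => x * H x)).sum :=
    (hperm.map _).sum_eq
  refine ⟨p', hadm', ?_⟩
  rw [armV_eq_seqG H α β t1 T pbar p ht1, armV_eq_seqG H α β' t1 T pbar p' ht1,
    ← hn, ← hl, hmap, seqG_armRev, seqG_armRev, hHsum, hL0]
  have hβL : 0 ≤ β * seqG lf (t1:ℝ) pbar l := mul_nonneg hβ hLnn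
  have hαG : α * seqG gf (t1:ℝ) pbar l ≤ α * seqG gf (t1:ℝ) pbar l' :=
    mul_le_mul_of_nonneg_left hG hα
  linarith

lemma armRef_mem (pbar : ℝ) (hpbar : 0 ≤ pbar) (t1 T : ℕ) (ht1 : 1 ≤ t1)
    (p : ℕ → ℝ) (hp : ∀ s ∈ Finset.Icc t1 T, p s ∈ Set.Icc 0 pbar)
    (t : ℕ) (ht : t ∈ Finset.Icc t1 T) :
    armRef t1 pbar p t ∈ Set.Icc 0 pbar := by
  obtain ⟨htl, htu⟩ := Finset.mem_Icc.mp ht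
  have htpos : (0:ℝ) < (t:ℝ) := by exact_mod_cast (by omega : 0 < t)
  have hsub : ∀ s ∈ Finset.Ico t1 t, p s ∈ Set.Icc 0 pbar := by
    intro s hs
    obtain ⟨h1, h2⟩ := Finset.mem_Ico.mp hs
    exact hp s (Finset.mem_Icc.mpr ⟨h1, by omega⟩)
  rw [Set.mem_Icc, armRef]
  constructor
  · apply div_nonneg _ htpos.le
    have : 0 ≤ ∑ s ∈ Finset.Ico t1 t, p s :=
      Finset.sum_nonneg (fun s hs => (hsub s hs).1)
    have h0 : 0 ≤ (t1:ℝ) * pbar := by positivity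
    linarith
  · rw [div_le_iff₀ htpos]
    have hs : ∑ s ∈ Finset.Ico t1 t, p s ≤ (Finset.Ico t1 t).card • pbar :=
      Finset.sum_le_card_nsmul _ _ _ (fun s hs => (hsub s hs).2)
    rw [Nat.card_Ico, nsmul_eq_mul] at hs
    have hc : ((t - t1 : ℕ) : ℝ) = (t:ℝ) - (t1:ℝ) := by
      push_cast [htl]; ring
    rw [hc] at hs
    nlinarith

lemma armV_bound (pbar : ℝ) (hpbar : 0 < pbar) (H : ℝ → ℝ) (C : ℝ)
    (hC : ∀ x ∈ Set.Icc (0:ℝ) pbar, |H x| ≤ C) (α β : ℝ) (hα : 0 ≤ α) (hβ : 0 ≤ β)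
    (t1 T : ℕ) (ht1 : 1 ≤ t1) (p : ℕ → ℝ)
    (hp : ∀ t ∈ Finset.Icc t1 T, p t ∈ Set.Icc 0 pbar) :
    armV H α β t1 T pbar p ≤ ((T:ℝ)+1) * (pbar * C + α * pbar^2) := by
  have hC0 : 0 ≤ C := le_trans (abs_nonneg _) (hC 0 ⟨le_refl _, hpbar.le⟩)
  have hterm : ∀ t ∈ Finset.Icc t1 T,
      armRev H α β (p t) (armRef t1 pbar p t) ≤ pbar * C + α * pbar^2 := by
    intro t ht
    obtain ⟨hx0, hxp⟩ := hp t ht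
    obtain ⟨hr0, hrp⟩ := armRef_mem pbar hpbar.le t1 T ht1 p hp t ht
    set x := p t
    set r := armRef t1 pbar p t
    have hHx := abs_le.mp (hC x ⟨hx0, hxp⟩)
    have h1 : x * H x ≤ pbar * C := by nlinarith [hHx.2]
    have h2 : x * max (r - x) 0 ≤ pbar * pbar := by
      have hm : max (r - x) 0 ≤ pbar := max_le (by linarith) hpbar.le
      nlinarith [le_max_right (r - x) (0:ℝ)]
    have h3 : 0 ≤ x * max (x - r) 0 := mul_nonneg hx0 (le_max_right _ _)
    have : armRev H α β x r = x * H x + α * (x * max (r - x) 0) - β * (x * max (x - r) 0) := by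
      rw [armRev]; ring
    rw [this]
    nlinarith
  have hsum : armV H α β t1 T pbar p ≤ (Finset.Icc t1 T).card • (pbar * C + α * pbar^2) :=
    Finset.sum_le_card_nsmul _ _ _ hterm
  rw [nsmul_eq_mul] at hsum
  have hcard : ((Finset.Icc t1 T).card : ℝ) ≤ (T:ℝ) + 1 := by
    rw [Nat.card_Icc]
    have : T + 1 - t1 ≤ T + 1 := by omega
    exact_mod_cast this
  have hB : 0 ≤ pbar * C + α * pbar^2 := by positivity
  nlinarith

/-- When the starting reference price equals the price cap `p̄`, the optimal ARM revenue
is unchanged if the loss parameter `η⁻` is replaced by the gain parameter `η⁺`. -/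
theorem vstar_at_cap_independent_of_loss
    (pbar : ℝ) (hpbar : 0 < pbar) (H : ℝ → ℝ)
    (hH : ∃ C : ℝ, ∀ x ∈ Set.Icc (0 : ℝ) pbar, |H x| ≤ C)
    (ηp ηm : ℝ) (hηp : 0 ≤ ηp) (hηm : 0 ≤ ηm)
    (t1 T : ℕ) (ht1 : 1 ≤ t1) (hT : t1 ≤ T) :
    armVStar H ηp ηm t1 T pbar pbar = armVStar H ηp ηp t1 T pbar pbar := by
  obtain ⟨C, hC⟩ := hH
  set A := {x : ℝ | ∃ p : ℕ → ℝ,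
    (∀ t ∈ Finset.Icc t1 T, p t ∈ Set.Icc 0 pbar) ∧ x = armV H ηp ηm t1 T pbar p} with hA
  set B := {x : ℝ | ∃ p : ℕ → ℝ,
    (∀ t ∈ Finset.Icc t1 T, p t ∈ Set.Icc 0 pbar) ∧ x = armV H ηp ηp t1 T pbar p} with hB
  have hzero : ∀ t ∈ Finset.Icc t1 T, (fun _ : ℕ => (0:ℝ)) t ∈ Set.Icc 0 pbar :=
    fun t _ => ⟨le_refl _, hpbar.le⟩
  have hAne : A.Nonempty := ⟨_, ⟨_, hzero, rfl⟩⟩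
  have hBne : B.Nonempty := ⟨_, ⟨_, hzero, rfl⟩⟩
  have hAbdd : BddAbove A := by
    refine ⟨((T:ℝ)+1) * (pbar * C + ηp * pbar^2), ?_⟩
    rintro x ⟨p, hp, rfl⟩
    exact armV_bound pbar hpbar H C hC ηp ηm hηp hηm t1 T ht1 p hp
  have hBbdd : BddAbove B := by
    refine ⟨((T:ℝ)+1) * (pbar * C + ηp * pbar^2), ?_⟩
    rintro x ⟨p, hp, rfl⟩
    exact armV_bound pbar hpbar H C hC ηp ηp hηp hηp t1 T ht1 p hp
  rw [armVStar, armVStar, ← hA, ← hB]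
  apply le_antisymm
  · apply csSup_le hAne
    rintro x ⟨p, hp, rfl⟩
    obtain ⟨p', hp', hle⟩ := arm_key pbar hpbar H ηp ηm ηp hηp hηm hηp t1 T ht1 hT p hp
    exact le_trans hle (le_csSup hBbdd ⟨p', hp', rfl⟩)
  · apply csSup_le hBne
    rintro x ⟨p, hp, rfl⟩
    obtain ⟨p', hp', hle⟩ := arm_key pbar hpbar H ηp ηp ηm hηp hηp hηm t1 T ht1 hT p hp
    exact le_trans hle (le_csSup hAbdd ⟨p', hp', rfl⟩)
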